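/- arXiv:2102.13005 — 2 statements merged into one kernel-verified Lean document; each statement's English description precedes it below -/
import Mathlib

section
/- Let T = {h ∈ S_n^m : maj(h) = 0}. Then T is a left transversal to the subgroup S_n (colored permutations with all colors zero) in S_n^m, and in the group ring, ∑_{g ∈ S_n^m} p^{maj(g)} q^{col(g)}·g = (∑_{h ∈ T} q^{col(h)}·h)(∑_{w ∈ S_n} p^{maj(w)}·w). -/
/-- The group `Sₙᵐ = Sₙ ⋉ (ℤ/mℤ)ⁿ` of `m`-colored permutations, with
`(g,x)(h,y) = (gh, x∘h + y)` where `(x∘h)_i = x_{h(i)}`. -/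
def ColoredPerm (n m : ℕ) : Type := Equiv.Perm (Fin n) × (Fin n → ZMod m)

namespace ColoredPerm

variable {n m : ℕ}

instance : Mul (ColoredPerm n m) := ⟨fun a b => (a.1 * b.1, a.2 ∘ ⇑b.1 + b.2)⟩
instance : One (ColoredPerm n m) := ⟨(1, 0)⟩
instance : Inv (ColoredPerm n m) := ⟨fun a => (a.1⁻¹, -(a.2 ∘ ⇑(a.1⁻¹)))⟩

theorem mul_def (a b : ColoredPerm n m) : a * b = (a.1 * b.1, a.2 ∘ ⇑b.1 + b.2) := rfl
theorem one_def : (1 : ColoredPerm n m) = ((1 : Equiv.Perm (Fin n)), 0) := rfl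
theorem inv_def (a : ColoredPerm n m) : a⁻¹ = (a.1⁻¹, -(a.2 ∘ ⇑(a.1⁻¹))) := rfl

instance : Group (ColoredPerm n m) where
  mul_assoc a b c := by
    rw [mul_def, mul_def, mul_def, mul_def]
    refine Prod.ext (mul_assoc _ _ _) ?_
    funext i
    simp [Function.comp, Equiv.Perm.mul_apply, add_assoc]
  one_mul a := by
    rw [mul_def, one_def]
    refine Prod.ext (one_mul _) ?_
    funext i
    simp
  mul_one a := by
    rw [mul_def, one_def]
    refine Prod.ext (mul_one _) ?_
    funext i
    simp
  inv_mul_cancel a := by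
    rw [mul_def, inv_def, one_def]
    refine Prod.ext (inv_mul_cancel _) ?_
    funext i
    simp [Function.comp]

instance [NeZero m] : Fintype (ColoredPerm n m) :=
  inferInstanceAs (Fintype (Equiv.Perm (Fin n) × (Fin n → ZMod m)))

instance : DecidableEq (ColoredPerm n m) :=
  inferInstanceAs (DecidableEq (Equiv.Perm (Fin n) × (Fin n → ZMod m)))

/-- total color -/
def col (g : ColoredPerm n m) : ℕ := ∑ i, (g.2 i).val

/-- major index of a colored permutation w.r.t. the order
`n > ⋯ > 1 > n̄ > ⋯ > 1̄ > n̿ > ⋯`: the letter at position `i` (value `w(i)` with `x_i`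
bars) is larger than the one at position `i+1` iff its color is smaller, or the colors
agree and its value is larger. -/
def cmaj (g : ColoredPerm n m) : ℕ :=
  ∑ i : Fin n, if h : i.1 + 1 < n then
    (if ((g.2 i).val < (g.2 ⟨i.1 + 1, h⟩).val ∨
        ((g.2 i).val = (g.2 ⟨i.1 + 1, h⟩).val ∧ g.1 ⟨i.1 + 1, h⟩ < g.1 i))
      then i.1 + 1 else 0) else 0

/-- flag major index -/
def fmaj (g : ColoredPerm n m) : ℕ := m * cmaj g + col g

/-- `t̃_{i+1} = (t_{i+1}, (1,0,…,0))` where `t_{i+1} = (i+1, i, …, 1)`. -/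
def ttil (i : Fin n) : ColoredPerm n m :=
  ((Fin.cycleRange i)⁻¹, fun j => if (j : ℕ) = 0 then 1 else 0)

end ColoredPerm

namespace ColoredPerm

variable {n m : ℕ}

/-- sorting key: positions sorted by decreasing color, then increasing value. -/
def key (g : ColoredPerm n m) (j : Fin n) : ℕᵒᵈ ×ₗ Fin n :=
  toLex (OrderDual.toDual (g.2 j).val, g.1 j)

lemma key_lt_iff {g : ColoredPerm n m} {a b : Fin n} :
    key g a < key g b ↔
      ((g.2 b).val < (g.2 a).val ∨ ((g.2 a).val = (g.2 b).val ∧ g.1 a < g.1 b)) := by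
  rw [key, key, Prod.Lex.lt_iff]
  constructor
  · rintro (h | ⟨h1, h2⟩)
    · exact Or.inl h
    · exact Or.inr ⟨(OrderDual.toDual_inj.mp h1), h2⟩
  · rintro (h | ⟨h1, h2⟩)
    · exact Or.inl h
    · exact Or.inr ⟨congrArg OrderDual.toDual h1, h2⟩

lemma key_injective (g : ColoredPerm n m) : Function.Injective (key g) := by
  intro a b hab
  have h2 := congrArg (fun p => (ofLex p).2) hab
  exact g.1.injective h2

/-- The descent condition appearing in `cmaj` equals a key inequality. -/
lemma desc_iff_key {g : ColoredPerm n m} {a b : Fin n} :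
    ((g.2 a).val < (g.2 b).val ∨ ((g.2 a).val = (g.2 b).val ∧ g.1 b < g.1 a)) ↔
      key g b < key g a := by
  rw [key_lt_iff]
  constructor
  · rintro (h | ⟨h1, h2⟩); · exact Or.inl h
    · exact Or.inr ⟨h1.symm, h2⟩
  · rintro (h | ⟨h1, h2⟩); · exact Or.inl h
    · exact Or.inr ⟨h1.symm, h2⟩

lemma strictMono_of_consec {α : Type*} [Preorder α] {f : Fin n → α}
    (h : ∀ (i : Fin n) (hi : i.1 + 1 < n), f i < f ⟨i.1 + 1, hi⟩) : StrictMono f := by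
  have H : ∀ (k : ℕ) (a : Fin n) (hb : a.1 + k + 1 < n), f a < f ⟨a.1 + k + 1, hb⟩ := by
    intro k
    induction k with
    | zero => intro a hb; exact h a hb
    | succ k ih =>
      intro a hb
      refine (ih a (by omega)).trans ?_
      have := h ⟨a.1 + k + 1, by omega⟩ hb
      exact this
  intro a b hab
  have hb : b = ⟨a.1 + (b.1 - a.1 - 1) + 1, by omega⟩ := by
    apply Fin.ext; simp; omega
  rw [hb]
  exact H _ a _

lemma cmaj_eq_zero_iff {g : ColoredPerm n m} : cmaj g = 0 ↔ StrictMono (key g) := by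
  constructor
  · intro h0
    apply strictMono_of_consec
    intro i hi
    have hterm := (Finset.sum_eq_zero_iff.mp h0) i (Finset.mem_univ i)
    rw [dif_pos hi] at hterm
    by_contra hlt
    have hne : key g ⟨i.1 + 1, hi⟩ ≠ key g i := by
      intro he
      have := key_injective g he
      simp [Fin.ext_iff] at this
    have hlt' : key g ⟨i.1 + 1, hi⟩ < key g i := lt_of_le_of_ne (not_lt.mp hlt) hne
    rw [if_pos (desc_iff_key.mpr hlt')] at hterm
    omega
  · intro hmono
    apply Finset.sum_eq_zero
    intro i _
    split_ifs with h hd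
    · exfalso
      have := desc_iff_key.mp hd
      have h2 : key g i < key g ⟨i.1 + 1, h⟩ := hmono (by simp [Fin.lt_def])
      exact absurd h2 (not_lt.mpr this.le)
    · rfl
    · rfl

/-- the sorted (min-coset-representative) part of `g` -/
def sfst (g : ColoredPerm n m) : ColoredPerm n m :=
  (g.1 * Tuple.sort (key g), g.2 ∘ ⇑(Tuple.sort (key g)))

/-- the zero-color part of `g` -/
def ssnd (g : ColoredPerm n m) : ColoredPerm n m := ((Tuple.sort (key g))⁻¹, 0)

lemma key_sfst (g : ColoredPerm n m) :
    key (sfst g) = key g ∘ ⇑(Tuple.sort (key g)) := by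
  funext j
  simp only [key, sfst, Function.comp_apply, Equiv.Perm.mul_apply]

lemma cmaj_sfst (g : ColoredPerm n m) : cmaj (sfst g) = 0 := by
  rw [cmaj_eq_zero_iff, key_sfst]
  exact (Tuple.monotone_sort (key g)).strictMono_of_injective
    ((key_injective g).comp (Tuple.sort (key g)).injective)

lemma sfst_mul_ssnd (g : ColoredPerm n m) : sfst g * ssnd g = g := by
  rw [mul_def, sfst, ssnd]
  refine Prod.ext (by simp) ?_
  funext j
  simp

lemma key_mul {h w : ColoredPerm n m} (h2 : w.2 = 0) :
    key (h * w) = key h ∘ ⇑w.1 := by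
  funext j
  simp only [key, mul_def, Function.comp_apply, Equiv.Perm.mul_apply, h2, Pi.add_apply,
    Pi.zero_apply, add_zero]

lemma factor_eq {h w : ColoredPerm n m} (h1 : cmaj h = 0) (h2 : w.2 = 0) :
    h = sfst (h * w) ∧ w = ssnd (h * w) := by
  have hkey : key (h * w) = key h ∘ ⇑w.1 := key_mul h2
  have hsm : StrictMono (key h) := cmaj_eq_zero_iff.mp h1
  have hmono : Monotone (key (h * w) ∘ ⇑(w.1⁻¹)) := by
    have : key (h * w) ∘ ⇑(w.1⁻¹) = key h := by
      funext j; simp [hkey]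
    rw [this]; exact hsm.monotone
  have huniq := Tuple.unique_monotone hmono (Tuple.monotone_sort (key (h * w)))
  have hperm : (w.1⁻¹ : Equiv.Perm (Fin n)) = Tuple.sort (key (h * w)) :=
    Equiv.ext fun j => key_injective (h * w) (congrFun huniq j)
  constructor
  · rw [sfst, ← hperm]
    refine Prod.ext ?_ ?_
    · show h.1 = (h * w).1 * w.1⁻¹
      rw [mul_def]; group
    · show h.2 = (h * w).2 ∘ ⇑(w.1⁻¹)
      funext j
      simp [mul_def, h2]
  · rw [ssnd, ← hperm]
    exact Prod.ext_iff.mpr ⟨by simp, h2⟩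

lemma col_mul {h w : ColoredPerm n m} (h2 : w.2 = 0) : col (h * w) = col h := by
  rw [col, col]
  have : ∀ i, ((h * w).2 i).val = (h.2 (w.1 i)).val := by
    intro i; rw [mul_def]; simp [h2]
  simp_rw [this]
  exact Equiv.sum_comp w.1 (fun i => (h.2 i).val)

lemma cmaj_mul {h w : ColoredPerm n m} (h1 : cmaj h = 0) (h2 : w.2 = 0) :
    cmaj (h * w) = cmaj w := by
  have hsm : StrictMono (key h) := cmaj_eq_zero_iff.mp h1
  have hkey : key (h * w) = key h ∘ ⇑w.1 := key_mul h2
  rw [cmaj, cmaj]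
  apply Finset.sum_congr rfl
  intro i _
  by_cases hi : i.1 + 1 < n
  · rw [dif_pos hi, dif_pos hi]
    congr 1
    have lhs : ((h * w).2 i).val < ((h * w).2 ⟨i.1 + 1, hi⟩).val ∨
        (((h * w).2 i).val = ((h * w).2 ⟨i.1 + 1, hi⟩).val ∧
          (h * w).1 ⟨i.1 + 1, hi⟩ < (h * w).1 i) ↔ w.1 ⟨i.1 + 1, hi⟩ < w.1 i := by
      rw [desc_iff_key, hkey]
      exact hsm.lt_iff_lt
    have rhs : (w.2 i).val < (w.2 ⟨i.1 + 1, hi⟩).val ∨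
        ((w.2 i).val = (w.2 ⟨i.1 + 1, hi⟩).val ∧ w.1 ⟨i.1 + 1, hi⟩ < w.1 i) ↔
          w.1 ⟨i.1 + 1, hi⟩ < w.1 i := by
      simp [h2]
    exact propext (lhs.trans rhs.symm)
  · rw [dif_neg hi, dif_neg hi]

end ColoredPerm


open ColoredPerm MvPolynomial in
/-- `T = {h ∈ Sₙᵐ : maj(h) = 0}` is a left transversal to the subgroup
`Sₙ` (colored permutations with all colors zero) in `Sₙᵐ`, and in the group ring
`∑_g p^{maj g} q^{col g}·g = (∑_{h ∈ T} q^{col h}·h)(∑_{w ∈ Sₙ} p^{maj w}·w)`. -/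
theorem stmt16 (n m : ℕ) (hn : 1 ≤ n) (hm : 1 ≤ m) [NeZero m] :
    (∀ g : ColoredPerm n m, ∃! p : ColoredPerm n m × ColoredPerm n m,
      cmaj p.1 = 0 ∧ p.2.2 = 0 ∧ g = p.1 * p.2) ∧
    (∑ g : ColoredPerm n m,
        MonoidAlgebra.single g
          ((X 0 : MvPolynomial (Fin 2) ℚ) ^ cmaj g * (X 1 : MvPolynomial (Fin 2) ℚ) ^ col g)) =
      (∑ h : ColoredPerm n m,
          if cmaj h = 0 then
            MonoidAlgebra.single h ((X 1 : MvPolynomial (Fin 2) ℚ) ^ col h) else 0) *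
      (∑ w : ColoredPerm n m,
          if w.2 = 0 then
            MonoidAlgebra.single w ((X 0 : MvPolynomial (Fin 2) ℚ) ^ cmaj w) else 0) :=  by
  constructor
  · intro g
    refine ⟨(sfst g, ssnd g), ⟨cmaj_sfst g, rfl, (sfst_mul_ssnd g).symm⟩, ?_⟩
    rintro ⟨h, w⟩ ⟨h1, h2, h3⟩
    obtain ⟨e1, e2⟩ := factor_eq h1 h2
    subst h3
    exact Prod.ext_iff.mpr ⟨e1, e2⟩
  · classical
    let F : ColoredPerm n m × ColoredPerm n m →
        MonoidAlgebra (MvPolynomial (Fin 2) ℚ) (ColoredPerm n m) :=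
      fun p => MonoidAlgebra.single (p.1 * p.2)
        ((X 1 : MvPolynomial (Fin 2) ℚ) ^ col p.1 * (X 0 : MvPolynomial (Fin 2) ℚ) ^ cmaj p.2)
    have h1 : (∑ g : ColoredPerm n m,
        MonoidAlgebra.single g
          ((X 0 : MvPolynomial (Fin 2) ℚ) ^ cmaj g * (X 1 : MvPolynomial (Fin 2) ℚ) ^ col g))
        = ∑ p ∈ Finset.univ.filter
            (fun p : ColoredPerm n m × ColoredPerm n m => cmaj p.1 = 0 ∧ p.2.2 = 0), F p := by
      refine Finset.sum_nbij' (fun g => (sfst g, ssnd g)) (fun p => p.1 * p.2) ?_ ?_ ?_ ?_ ?_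
      · intro g _
        exact Finset.mem_filter.mpr ⟨Finset.mem_univ _, cmaj_sfst g, rfl⟩
      · intro p _; exact Finset.mem_univ _
      · intro g _; exact sfst_mul_ssnd g
      · intro p hp
        rw [Finset.mem_filter] at hp
        obtain ⟨e1, e2⟩ := factor_eq hp.2.1 hp.2.2
        exact (Prod.ext_iff.mpr ⟨e1, e2⟩).symm
      · intro g _
        have hcol : col g = col (sfst g) := by
          conv_lhs => rw [← sfst_mul_ssnd g]
          exact col_mul rfl
        have hcm : cmaj g = cmaj (ssnd g) := by
          conv_lhs => rw [← sfst_mul_ssnd g]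
          exact cmaj_mul (cmaj_sfst g) rfl
        show _ = MonoidAlgebra.single _ _
        rw [sfst_mul_ssnd g, ← hcol, ← hcm, mul_comm]
    rw [h1, Finset.sum_filter, Fintype.sum_prod_type, Fintype.sum_mul_sum]
    apply Finset.sum_congr rfl
    intro h _
    apply Finset.sum_congr rfl
    intro w _
    rcases em (cmaj h = 0) with h1 | h1 <;> rcases em (w.2 = 0) with h2 | h2 <;>
      simp [F, h1, h2, MonoidAlgebra.single_mul_single]
end

section
/- For all m, n ≥ 1, det( p^{amaj(g h^{-1})} q^{col(g h^{-1})} )_{g,h ∈ S_n^m} = (1 − q^m)^{n! m^{n−1}(m−1) n} · ∏_{k=2}^n (1 − p^k)^{n! m^n (k−1)/k}, where for a colored permutation g = (w,x), amaj(g) = maj(w) is the major index of the underlying (uncolored) permutation and col(g) = ∑_i |x_i|. -/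
/-- The (ordinary) major index of a permutation. -/
def pmaj {n : ℕ} (w : Equiv.Perm (Fin n)) : ℕ :=
  ∑ i : Fin n, if h : i.1 + 1 < n then
    (if w ⟨i.1 + 1, h⟩ < w i then i.1 + 1 else 0) else 0


section Circulant
variable {R : Type*} [CommRing R]

lemma zmod_val_sub_one {k : ℕ} [NeZero k] (x : ZMod k) (hx : x ≠ 0) :
    (x - 1).val = x.val - 1 := by
  have hv : 1 ≤ x.val := Nat.one_le_iff_ne_zero.2 (fun h => hx ((ZMod.val_eq_zero x).1 h))
  have hx' : x = ((x.val : ℕ) : ZMod k) := (ZMod.natCast_zmod_val x).symm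
  have : x - 1 = (((x.val - 1 : ℕ)) : ZMod k) := by
    rw [Nat.cast_sub hv, Nat.cast_one, ← hx']
  rw [this, ZMod.val_natCast, Nat.mod_eq_of_lt (lt_of_le_of_lt (Nat.sub_le _ _) x.val_lt)]

lemma zmod_val_zero_sub_one {k : ℕ} [NeZero k] : ((0 : ZMod k) - 1).val = k - 1 := by
  obtain ⟨k', rfl⟩ : ∃ k', k = k' + 1 := ⟨k - 1, (Nat.succ_pred_eq_of_pos (Nat.pos_of_ne_zero (NeZero.ne k))).symm⟩
  rw [zero_sub]
  exact ZMod.val_neg_one k'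

theorem det_circulant (k : ℕ) [NeZero k] (q : R) :
    Matrix.det (Matrix.of fun a b : ZMod k => q ^ (a - b).val) = (1 - q ^ k) ^ (k - 1) := by
  have hk : 1 ≤ k := Nat.one_le_iff_ne_zero.2 (NeZero.ne k)
  set e : Fin k ≃ ZMod k :=
    { toFun := fun i => (i.1 : ZMod k)
      invFun := fun x => ⟨x.val, x.val_lt⟩
      left_inv := fun i => by ext; simp [ZMod.val_natCast_of_lt i.isLt]
      right_inv := fun x => by simp [ZMod.natCast_zmod_val] } with he
  rw [← Matrix.det_submatrix_equiv_self e]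
  set C : Matrix (Fin k) (Fin k) R :=
    (Matrix.of fun a b : ZMod k => q ^ (a - b).val).submatrix e e with hC
  have hCab : ∀ a b : Fin k, C a b = q ^ (((a.1 : ZMod k)) - (b.1 : ZMod k)).val := fun a b => rfl
  set T : Matrix (Fin k) (Fin k) R :=
    Matrix.of (fun c b : Fin k => if c = b then (1:R) else if c.1 = b.1 + 1 then -q else 0) with hT
  set D : Matrix (Fin k) (Fin k) R :=
    Matrix.of (fun a b : Fin k => if b.1 + 1 = k then q ^ (((a.1 : ZMod k)) + 1).val
      else if a = b then 1 - q ^ k else 0) with hD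
  have hinj : ∀ a b : Fin k, ((a.1 : ZMod k)) = (b.1 : ZMod k) → a = b := by
    intro a b h
    apply Fin.ext
    have := congrArg ZMod.val h
    rwa [ZMod.val_natCast_of_lt a.isLt, ZMod.val_natCast_of_lt b.isLt] at this
  have hCT : C * T = D := by
    ext a b
    rw [Matrix.mul_apply]
    by_cases hb : b.1 + 1 = k
    · have : ∀ c, C a c * T c b = if c = b then C a b else 0 := by
        intro c
        by_cases h1 : c = b
        · simp [hT, h1]
        · have h2 : ¬ (c.1 = b.1 + 1) := by
            intro h; exact absurd (h.trans hb ▸ c.isLt) (by omega)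
          simp [hT, h1, h2]
      rw [Finset.sum_congr rfl (fun c _ => this c), Finset.sum_ite_eq' Finset.univ b]
      have hb1 : ((b.1 : ZMod k)) = -1 := by
        have : ((b.1 : ℕ) : ZMod k) = ((k - 1 : ℕ) : ZMod k) := by congr 1; omega
        rw [this, Nat.cast_sub hk, ZMod.natCast_self, Nat.cast_one, zero_sub]
      simp [hD, hb, hCab, hb1, sub_neg_eq_add]
    · have hb' : b.1 + 1 < k := by omega
      set b' : Fin k := ⟨b.1 + 1, hb'⟩ with hbdef
      have hbne : b ≠ b' := by
        intro h; exact absurd (congrArg Fin.val h) (by simp [hbdef])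
      have hsplit : ∀ c, C a c * T c b =
          (if c = b then C a b else 0) + (if c = b' then -q * C a b' else 0) := by
        intro c
        by_cases h1 : c = b
        · have : ¬ (c = b') := h1 ▸ hbne
          simp [hT, h1, this, hbne, Ne.symm hbne]
        · by_cases h2 : c = b'
          · have hval : c.1 = b.1 + 1 := by simp [h2, hbdef]
            simp [hT, h1, h2, hval, mul_comm, Ne.symm hbne, show b'.1 = b.1 + 1 from rfl]
          · have hval : ¬ (c.1 = b.1 + 1) := by
              intro h; exact h2 (Fin.ext h)
            simp [hT, h1, h2, hval]
      rw [Finset.sum_congr rfl (fun c _ => hsplit c), Finset.sum_add_distrib,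
        Finset.sum_ite_eq' Finset.univ b, Finset.sum_ite_eq' Finset.univ b']
      simp only [Finset.mem_univ, if_true]
      have hb'cast : ((b'.1 : ℕ) : ZMod k) = ((b.1 : ℕ) : ZMod k) + 1 := by
        simp [hbdef, Nat.cast_add]
      set x : ZMod k := ((a.1 : ℕ) : ZMod k) - ((b.1 : ℕ) : ZMod k) with hx
      have hCab' : C a b' = q ^ (x - 1).val := by
        rw [hCab, hb'cast, hx]; ring_nf
      by_cases hab : a = b
      · have hx0 : x = 0 := by rw [hx, hab, sub_self]
        rw [hCab, hCab', hx0]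
        have : ((0:ZMod k) - 1).val = k - 1 := zmod_val_zero_sub_one
        rw [this]
        have hq : q * q ^ (k-1) = q ^ k := by
          rw [← pow_succ']; congr 1; omega
        simp [hD, hab, Fin.ext_iff, hb]
        rw [hq]
        ring
      · have hx0 : x ≠ 0 := by
          intro h
          exact hab (hinj a b (by rwa [sub_eq_zero] at h))
        have hv1 : 1 ≤ x.val := Nat.one_le_iff_ne_zero.2 (fun h => hx0 ((ZMod.val_eq_zero x).1 h))
        rw [hCab, hCab', zmod_val_sub_one x hx0, ← hx]
        have : -q * q ^ (x.val - 1) = -(q ^ x.val) := by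
          rw [neg_mul, ← pow_succ']
          congr 2; omega
        rw [this]
        have hDab : D a b = 0 := by
          simp [hD, hb, hab]
        rw [hDab]; ring
  have hdetT : T.det = 1 := by
    have htri : T.BlockTriangular OrderDual.toDual := by
      intro i j hij
      have h1 : ¬ (i = j) := by intro h; exact absurd h.symm.le (not_le.2 hij)
      have h2 : ¬ (i.1 = j.1 + 1) := by
        have : i < j := hij
        have := Fin.lt_def.1 this
        omega
      simp [hT, h1, h2]
    rw [Matrix.det_of_lowerTriangular T htri]
    simp [hT]
  have hdetD : D.det = (1 - q ^ k) ^ (k - 1) := by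
    have htri : D.BlockTriangular id := by
      intro i j hij
      have hij' : j.1 < i.1 := hij
      have h1 : ¬ (j.1 + 1 = k) := by have := i.isLt; omega
      have h2 : ¬ (i = j) := by intro h; rw [h] at hij'; omega
      simp [hD, h1, h2]
    rw [Matrix.det_of_upperTriangular htri]
    obtain ⟨k', rfl⟩ : ∃ k', k = k' + 1 :=
      ⟨k - 1, (Nat.succ_pred_eq_of_pos (Nat.pos_of_ne_zero (NeZero.ne k))).symm⟩
    rw [Fin.prod_univ_castSucc]
    have hlast : D (Fin.last k') (Fin.last k') = 1 := by
      have h0 : (((Fin.last k').1 : ℕ) : ZMod (k'+1)) + 1 = 0 := by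
        show ((k' : ℕ) : ZMod (k'+1)) + 1 = 0
        rw [show ((k' :ℕ) : ZMod (k'+1)) + 1 = (((k'+1 : ℕ)) : ZMod (k'+1)) by push_cast; ring,
          ZMod.natCast_self]
      simp [hD, Fin.last, h0]
    have hcs : ∀ i : Fin k', D i.castSucc i.castSucc = 1 - q ^ (k'+1) := by
      intro i
      have h1 : ((i.castSucc).1 : ℕ) ≠ k' := by
        have := i.isLt; simp only [Fin.coe_castSucc]; omega
      simp only [hD, Matrix.of_apply]
      rw [if_neg (by omega)]
      simp
    simp only [hcs, hlast, mul_one]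
    rw [Finset.prod_const]
    simp
  calc C.det = C.det * T.det := by rw [hdetT, mul_one]
    _ = (C * T).det := (Matrix.det_mul _ _).symm
    _ = D.det := by rw [hCT]
    _ = _ := hdetD

end Circulant

open Kronecker in
theorem det_subgroup_support {G : Type*} [Group G] [Fintype G] [DecidableEq G]
    {R : Type*} [CommRing R] (H : Subgroup G) [DecidablePred (· ∈ H)]
    (f : G → R) (hf : ∀ z : G, z ∉ H → f z = 0) :
    Matrix.det (Matrix.of fun g h : G => f (g⁻¹ * h)) =
      Matrix.det (Matrix.of fun a b : H => f ((a : G)⁻¹ * b)) ^ (Nat.card (G ⧸ H)) := by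
  classical
  letI : Fintype (G ⧸ H) := Fintype.ofFinite _
  let e : (G ⧸ H) × H ≃ G :=
  { toFun := fun qh => qh.1.out * qh.2
    invFun := fun g => (QuotientGroup.mk g,
      ⟨(QuotientGroup.mk g : G ⧸ H).out⁻¹ * g,
        QuotientGroup.eq.mp ((QuotientGroup.mk g : G ⧸ H).out_eq)⟩)
    left_inv := by
      rintro ⟨q, h, hh⟩
      have h1 : (QuotientGroup.mk (q.out * h) : G ⧸ H) = q := by
        rw [QuotientGroup.mk_mul_of_mem q.out hh, QuotientGroup.out_eq']
      refine Prod.ext h1 (Subtype.ext ?_)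
      simp only [h1]
      group
    right_inv := by
      intro g
      simp [mul_inv_cancel_left] }
  rw [← Matrix.det_submatrix_equiv_self e]
  have hmat : (Matrix.of fun g h : G => f (g⁻¹ * h)).submatrix e e =
      (1 : Matrix (G ⧸ H) (G ⧸ H) R) ⊗ₖ (Matrix.of fun a b : H => f ((a : G)⁻¹ * b)) := by
    ext ⟨q1, h1⟩ ⟨q2, h2⟩
    show f ((q1.out * h1)⁻¹ * (q2.out * h2)) = (if q1 = q2 then (1:R) else 0) * f ((h1 : G)⁻¹ * h2)
    by_cases hq : q1 = q2
    · subst hq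
      rw [if_pos rfl, one_mul]
      congr 1
      group
    · rw [if_neg hq, zero_mul]
      apply hf
      intro hmem
      apply hq
      have : (q1.out : G)⁻¹ * q2.out = (h1 : G) * (((q1.out * (h1:G))⁻¹ * (q2.out * h2)) * (h2 : G)⁻¹) := by
        group
      have hmem2 : (q1.out : G)⁻¹ * q2.out ∈ H := by
        rw [this]
        exact H.mul_mem h1.2 (H.mul_mem hmem (H.inv_mem h2.2))
      calc q1 = QuotientGroup.mk q1.out := (QuotientGroup.out_eq' q1).symm
        _ = QuotientGroup.mk q2.out := QuotientGroup.eq.mpr hmem2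
        _ = q2 := QuotientGroup.out_eq' q2
  rw [hmat, Matrix.det_kronecker, Matrix.det_one, one_pow, one_mul, Nat.card_eq_fintype_card]


namespace PermBlock
variable {n : ℕ}
open Fin.NatCast Fin.CommRing

/-- the cycle `x ↦ x - 1` on `Fin (n+1)` -/
def t (n : ℕ) : Equiv.Perm (Fin (n + 1)) := Equiv.subRight (1 : Fin (n + 1))

@[simp] lemma t_apply (x : Fin (n + 1)) : t n x = x - 1 := rfl

lemma t_pow_apply (a : ℕ) (x : Fin (n + 1)) : ((t n) ^ a) x = x - (a : Fin (n + 1)) := by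
  induction a with
  | zero => simp
  | succ a ih =>
    rw [pow_succ', Equiv.Perm.mul_apply, ih, t_apply]
    show x - (a : Fin (n+1)) - 1 = x - ((a : ℕ) + 1 : ℕ)
    push_cast
    ring

lemma fin_sub_one_val (v : Fin (n + 1)) :
    (v - 1).val = if v = 0 then n else v.val - 1 := by
  cases n with
  | zero =>
    have hlt := v.isLt
    have hv : v = 0 := Fin.ext (by omega)
    subst hv
    simp
  | succ k =>
    rw [Fin.sub_def]
    have h1 : (1 : Fin (k + 2)).val = 1 := rfl
    rcases eq_or_ne v.val 0 with h | h
    · have hv : v = 0 := Fin.ext h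
      rw [if_pos hv]
      show (k + 1 + 1 - (1 : Fin (k+2)).val + v.val) % (k + 1 + 1) = k + 1
      rw [h1, h]
      simp [Nat.mod_eq_of_lt]
    · have hv : ¬ (v = 0) := fun hh => h (by simp [hh])
      rw [if_neg hv]
      show (k + 1 + 1 - (1 : Fin (k+2)).val + v.val) % (k + 1 + 1) = v.val - 1
      rw [h1]
      have hlt := v.isLt
      have : k + 1 + 1 - 1 + v.val = (k + 2) + (v.val - 1) := by omega
      rw [this, Nat.add_mod_left, Nat.mod_eq_of_lt (by omega)]

end PermBlock

namespace PermBlock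
variable {n : ℕ}
open Fin.NatCast Fin.CommRing

lemma fin_val_eq_zero_iff (x : Fin (n + 1)) : x = 0 ↔ x.val = 0 :=
  ⟨fun h => by simp [h], fun h => Fin.ext h⟩

lemma pmaj_step (w : Equiv.Perm (Fin (n + 1))) (hw : w (Fin.last n) ≠ 0) :
    pmaj (t n * w) = pmaj w + 1 := by
  set p := w⁻¹ 0 with hpdef
  have hwp : w p = 0 := by rw [hpdef, Equiv.Perm.inv_def, Equiv.apply_symm_apply]
  have hp : p ≠ Fin.last n := fun h => hw (by rw [← h]; exact hwp)
  have hpn : p.val < n := by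
    have h1 := p.isLt
    have h2 : p.val ≠ n := fun h => hp (Fin.ext h)
    omega
  have hwx : ∀ x, w x = 0 ↔ x = p := fun x =>
    ⟨fun h => w.injective (h.trans hwp.symm), fun h => h ▸ hwp⟩
  have key : ∀ i : Fin (n+1),
      (if h : i.1 + 1 < n+1 then
        (if (t n * w) ⟨i.1+1, h⟩ < (t n * w) i then i.1+1 else 0) else 0)
      + (if i.1 + 1 = p.1 then p.1 else 0)
      = (if h : i.1 + 1 < n+1 then
          (if w ⟨i.1+1, h⟩ < w i then i.1+1 else 0) else 0)
      + (if i = p then p.1 + 1 else 0) := by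
    intro i
    by_cases hi : i.1 + 1 < n + 1
    · set j : Fin (n+1) := ⟨i.1+1, hi⟩ with hjdef
      rw [dif_pos hi, dif_pos hi]
      rw [Equiv.Perm.mul_apply, Equiv.Perm.mul_apply, t_apply, t_apply]
      by_cases hip : i = p
      · have hj0 : w j ≠ 0 := by
          rw [Ne, hwx j]
          intro h
          have := congrArg Fin.val h
          simp [hjdef, hip] at this
        have hwi : w i = 0 := (hwx i).mpr hip
        have hc1 : w j - 1 < w i - 1 := by
          rw [Fin.lt_def, fin_sub_one_val, fin_sub_one_val, if_neg hj0, if_pos hwi]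
          have h1 : (w j).val ≠ 0 := fun h => hj0 (Fin.ext h)
          have h2 := (w j).isLt
          omega
        have hc3 : ¬ (w j < w i) := by rw [hwi]; exact Fin.not_lt_zero _
        rw [if_pos hc1, if_neg (by rw [hip]; omega), if_pos hip, if_neg hc3, hip]
        omega
      · by_cases hjp : i.1 + 1 = p.1
        · have hj : j = p := Fin.ext hjp
          have hwj : w j = 0 := (hwx j).mpr hj
          have hwi0 : w i ≠ 0 := fun h => hip ((hwx i).mp h)
          have hc1 : ¬ (w j - 1 < w i - 1) := by
            rw [Fin.lt_def, fin_sub_one_val, fin_sub_one_val, if_pos hwj, if_neg hwi0]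
            have h2 := (w i).isLt
            omega
          have hc2 : w j < w i := by rw [hwj]; exact Fin.pos_iff_ne_zero.mpr hwi0
          rw [if_neg hc1, if_pos hjp, if_pos hc2, if_neg hip, hjp]
          omega
        · have hj0 : w j ≠ 0 := by
            rw [Ne, hwx j]
            intro h
            exact hjp (by rw [← h])
          have hwi0 : w i ≠ 0 := fun h => hip ((hwx i).mp h)
          have hiff : (w j - 1 < w i - 1) ↔ (w j < w i) := by
            rw [Fin.lt_def, Fin.lt_def, fin_sub_one_val, fin_sub_one_val,
              if_neg hj0, if_neg hwi0]
            have h1 : (w j).val ≠ 0 := fun h => hj0 (Fin.ext h)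
            have h2 : (w i).val ≠ 0 := fun h => hwi0 (Fin.ext h)
            omega
          rw [if_congr hiff rfl rfl, if_neg hjp, if_neg hip]
    · rw [dif_neg hi, dif_neg hi]
      have hii : i.val = n := by have := i.isLt; omega
      rw [if_neg (by omega), if_neg (by intro h; rw [h] at hii; omega)]
  have hsum := Finset.sum_congr rfl (fun i (_ : i ∈ Finset.univ) => key i)
  rw [Finset.sum_add_distrib, Finset.sum_add_distrib] at hsum
  have e1 : pmaj (t n * w) = ∑ i : Fin (n+1), (if h : i.1 + 1 < n+1 then
      (if (t n * w) ⟨i.1+1, h⟩ < (t n * w) i then i.1+1 else 0) else 0) := rfl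
  have e2 : pmaj w = ∑ i : Fin (n+1), (if h : i.1 + 1 < n+1 then
      (if w ⟨i.1+1, h⟩ < w i then i.1+1 else 0) else 0) := rfl
  rw [← e1, ← e2] at hsum
  have eS2 : (∑ i : Fin (n+1), if i = p then p.1 + 1 else 0) = p.1 + 1 := by
    rw [Finset.sum_ite_eq' Finset.univ p (fun _ => p.1 + 1)]
    simp
  rw [eS2] at hsum
  by_cases hp0 : p.val = 0
  · have eS1 : (∑ i : Fin (n+1), if i.1 + 1 = p.1 then p.1 else 0) = 0 := by
      apply Finset.sum_eq_zero
      intro i _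
      rw [if_neg (by omega)]
    rw [eS1] at hsum
    omega
  · have eS1 : (∑ i : Fin (n+1), if i.1 + 1 = p.1 then p.1 else 0) = p.1 := by
      rw [Finset.sum_eq_single (⟨p.1 - 1, by omega⟩ : Fin (n+1))]
      · rw [if_pos (by simp; omega)]
      · intro b _ hb
        rw [if_neg]
        intro h
        exact hb (Fin.ext (by simp; omega))
      · intro h
        exact absurd (Finset.mem_univ _) h
    rw [eS1] at hsum
    omega

end PermBlock

namespace PermBlock
variable {n : ℕ}
open Fin.NatCast Fin.CommRing

lemma pmaj_t_pow_mul (u : Equiv.Perm (Fin (n+1))) (hu : u (Fin.last n) = Fin.last n) :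
    ∀ a, a ≤ n → pmaj ((t n) ^ a * u) = a + pmaj u := by
  intro a
  induction a with
  | zero => intro _; simp
  | succ a ih =>
    intro ha
    have ha' : a ≤ n := by omega
    have h1 : ((t n) ^ a * u) (Fin.last n) ≠ 0 := by
      rw [Equiv.Perm.mul_apply, hu, t_pow_apply]
      intro h
      rw [sub_eq_zero] at h
      have hval := congrArg Fin.val h
      rw [Fin.val_last, Fin.val_cast_of_lt (by omega : a < n + 1)] at hval
      omega
    rw [pow_succ', mul_assoc, pmaj_step _ h1, ih ha']
    omega

def eFin (n : ℕ) : Fin n ≃ {i : Fin (n+1) // i.val < n} :=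
{ toFun := fun i => ⟨i.castSucc, by simp⟩
  invFun := fun s => ⟨s.1.val, s.2⟩
  left_inv := fun i => rfl
  right_inv := fun s => Subtype.ext (Fin.ext rfl) }

def φ (u : Equiv.Perm (Fin n)) : Equiv.Perm (Fin (n+1)) := u.extendDomain (eFin n)

lemma φ_apply_castSucc (u : Equiv.Perm (Fin n)) (i : Fin n) :
    φ u i.castSucc = (u i).castSucc := by
  exact Equiv.Perm.extendDomain_apply_image (e := u) (f := eFin n) (a := i)

lemma φ_last (u : Equiv.Perm (Fin n)) : φ u (Fin.last n) = Fin.last n := by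
  rw [φ, Equiv.Perm.extendDomain_apply_not_subtype]
  simp

lemma pmaj_φ (u : Equiv.Perm (Fin n)) : pmaj (φ u) = pmaj u := by
  have e1 : pmaj (φ u) = ∑ i : Fin (n+1), (if h : i.1 + 1 < n+1 then
      (if φ u ⟨i.1+1, h⟩ < φ u i then i.1+1 else 0) else 0) := rfl
  rw [e1, Fin.sum_univ_castSucc]
  have hlast : (if h : (Fin.last n).1 + 1 < n+1 then
      (if φ u ⟨(Fin.last n).1+1, h⟩ < φ u (Fin.last n) then (Fin.last n).1+1 else 0) else 0) = 0 := by
    rw [dif_neg]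
    simp
  rw [hlast, add_zero]
  apply Finset.sum_congr rfl
  intro i _
  have hcs : (i.castSucc).1 = i.1 := rfl
  have hii1 : (i.castSucc).1 + 1 < n + 1 := by have := i.isLt; omega
  rw [dif_pos hii1]
  by_cases hin : i.1 + 1 < n
  · have hmk : (⟨(i.castSucc).1 + 1, hii1⟩ : Fin (n+1)) = (⟨i.1+1, hin⟩ : Fin n).castSucc := rfl
    rw [hmk, φ_apply_castSucc, show i.castSucc = (i : Fin n).castSucc from rfl,
      φ_apply_castSucc, dif_pos hin]
    rw [if_congr (Fin.castSucc_lt_castSucc_iff) rfl rfl]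
    rfl
  · have hmk : (⟨(i.castSucc).1 + 1, hii1⟩ : Fin (n+1)) = Fin.last n := by
      apply Fin.ext
      simp only [Fin.val_last]
      have := i.isLt
      omega
    rw [hmk, φ_last, φ_apply_castSucc]
    have hnlt : ¬ (Fin.last n < (u i).castSucc) := by
      exact lt_asymm (Fin.castSucc_lt_last (u i))
    rw [if_neg hnlt, dif_neg hin]

end PermBlock

namespace PermBlock
variable {n : ℕ}
open Fin.NatCast Fin.CommRing

lemma φ_mul (u v : Equiv.Perm (Fin n)) : φ (u * v) = φ u * φ v :=
  map_mul (Equiv.Perm.extendDomainHom (eFin n)) u v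

lemma φ_inv (u : Equiv.Perm (Fin n)) : φ u⁻¹ = (φ u)⁻¹ :=
  map_inv (Equiv.Perm.extendDomainHom (eFin n)) u

/-- subgroup of permutations fixing `last` -/
def Hstab (n : ℕ) : Subgroup (Equiv.Perm (Fin (n+1))) :=
  MulAction.stabilizer (Equiv.Perm (Fin (n+1))) (Fin.last n)

lemma mem_Hstab {w : Equiv.Perm (Fin (n+1))} : w ∈ Hstab n ↔ w (Fin.last n) = Fin.last n := by
  rw [Hstab, MulAction.mem_stabilizer_iff, Equiv.Perm.smul_def]

noncomputable def ψ : Equiv.Perm (Fin n) ≃ (Hstab n) := by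
  refine Equiv.ofBijective (fun u => ⟨φ u, mem_Hstab.mpr (φ_last u)⟩) ⟨?_, ?_⟩
  · intro u v huv
    have := congrArg (Subtype.val) huv
    exact Equiv.Perm.extendDomainHom_injective (eFin n) this
  · rintro ⟨v, hv⟩
    rw [mem_Hstab] at hv
    have hvne : ∀ x : Fin (n+1), v x = Fin.last n ↔ x = Fin.last n := fun x =>
      ⟨fun h => v.injective (h.trans hv.symm), fun h => h ▸ hv⟩
    have hpres : ∀ x : Fin (n+1), x.val < n ↔ (v x).val < n := by
      intro x
      have h1 := x.isLt
      have h2 := (v x).isLt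
      constructor
      · intro h
        have : v x ≠ Fin.last n := fun hh => by
          have := (hvne x).mp hh
          rw [this] at h
          simp at h
        have : (v x).val ≠ n := fun hh => this (Fin.ext hh)
        omega
      · intro h
        have : x ≠ Fin.last n := fun hh => by
          have : v x = Fin.last n := (hvne x).mpr hh
          rw [this] at h
          simp at h
        have : x.val ≠ n := fun hh => this (Fin.ext hh)
        omega
    set u : Equiv.Perm (Fin n) :=
      (Equiv.permCongr (eFin n)).symm (v.subtypePerm (fun x => (hpres x).symm)) with hudef
    refine ⟨u, Subtype.ext ?_⟩
    show φ u = v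
    have hval : ∀ i : Fin n, (u i : ℕ) = ((v i.castSucc : Fin (n+1)) : ℕ) := fun i => rfl
    apply Equiv.ext
    intro x
    induction x using Fin.lastCases with
    | last => rw [φ_last, hv]
    | cast i =>
      rw [φ_apply_castSucc]
      apply Fin.ext
      rw [← hval i]
      rfl

lemma ψ_coe (u : Equiv.Perm (Fin n)) : (ψ u : Equiv.Perm (Fin (n+1))) = φ u := rfl

end PermBlock

namespace PermBlock
variable {n : ℕ}
open Fin.NatCast Fin.CommRing

lemma t_pow_eq_one_iff {n : ℕ} (a : ℕ) : (t n) ^ a = 1 ↔ (n+1) ∣ a := by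
  constructor
  · intro h
    have h0 := congrArg (fun (f : Equiv.Perm (Fin (n+1))) => f 0) h
    simp only [t_pow_apply, Equiv.Perm.one_apply, zero_sub, neg_eq_zero] at h0
    exact (Fin.natCast_eq_zero).mp h0
  · intro h
    apply Equiv.ext; intro x
    rw [t_pow_apply, (Fin.natCast_eq_zero).mpr h, sub_zero, Equiv.Perm.one_apply]

lemma orderOf_t (n : ℕ) : orderOf (t n) = n + 1 :=
  Nat.dvd_antisymm
    (orderOf_dvd_of_pow_eq_one ((t_pow_eq_one_iff _).mpr dvd_rfl))
    ((t_pow_eq_one_iff _).mp (pow_orderOf_eq_one _))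

variable {R : Type*} [CommRing R]

def Gfun (pp : R) (n : ℕ) : Equiv.Perm (Fin (n+1)) → R :=
  fun z => ∑ a ∈ Finset.range (n+1), if z = (t n) ^ a then pp ^ a else 0

def Efun (pp : R) (n : ℕ) : Equiv.Perm (Fin (n+1)) → R :=
  fun z => if z (Fin.last n) = Fin.last n then pp ^ (pmaj z) else 0

lemma Gfun_tpow (pp : R) {b : ℕ} (hb : b < n + 1) : Gfun pp n ((t n) ^ b) = pp ^ b := by
  rw [Gfun, Finset.sum_eq_single b]
  · rw [if_pos rfl]
  · intro a ha hab
    rw [if_neg]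
    intro h
    rw [pow_eq_pow_iff_modEq, orderOf_t] at h
    rw [Nat.ModEq] at h
    rw [Nat.mod_eq_of_lt hb, Nat.mod_eq_of_lt (Finset.mem_range.mp ha)] at h
    exact hab h.symm
  · intro hb'
    exact absurd (Finset.mem_range.mpr hb) hb'

lemma Gfun_support (pp : R) (z : Equiv.Perm (Fin (n+1)))
    (hz : z ∉ Subgroup.zpowers (t n)) : Gfun pp n z = 0 := by
  apply Finset.sum_eq_zero
  intro a _
  rw [if_neg]
  intro h
  exact hz (h ▸ Subgroup.npow_mem_zpowers (t n) a)

lemma Efun_support (pp : R) (z : Equiv.Perm (Fin (n+1)))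
    (hz : z ∉ Hstab n) : Efun pp n z = 0 := by
  rw [Efun, if_neg (fun h => hz (mem_Hstab.mpr h))]

lemma conv_GE (pp : R) (z : Equiv.Perm (Fin (n+1))) :
    ∑ y : Equiv.Perm (Fin (n+1)), Gfun pp n y * Efun pp n (y⁻¹ * z) = pp ^ pmaj z := by
  have step1 : ∀ y : Equiv.Perm (Fin (n+1)), Gfun pp n y * Efun pp n (y⁻¹ * z) =
      ∑ a ∈ Finset.range (n+1), (if y = (t n)^a then pp^a * Efun pp n (y⁻¹ * z) else 0) := by
    intro y
    rw [Gfun, Finset.sum_mul]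
    apply Finset.sum_congr rfl
    intro a _
    rw [ite_mul, zero_mul]
  rw [Finset.sum_congr rfl (fun y _ => step1 y), Finset.sum_comm]
  have step2 : ∀ a ∈ Finset.range (n+1),
      (∑ y : Equiv.Perm (Fin (n+1)), if y = (t n)^a then pp^a * Efun pp n (y⁻¹ * z) else 0)
      = pp ^ a * Efun pp n (((t n)^a)⁻¹ * z) := by
    intro a _
    rw [Finset.sum_ite_eq' Finset.univ ((t n)^a)
      (fun y => pp^a * Efun pp n (y⁻¹ * z)), if_pos (Finset.mem_univ _)]
  rw [Finset.sum_congr rfl step2]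
  set a0 : ℕ := (Fin.last n - z (Fin.last n)).val with ha0
  have ha0lt : a0 < n + 1 := Fin.is_lt _
  have hcond : ∀ a, a < n + 1 →
      (((((t n)^a)⁻¹ * z) (Fin.last n) = Fin.last n) ↔ a = a0) := by
    intro a ha
    rw [Equiv.Perm.mul_apply]
    constructor
    · intro h
      have h2 : z (Fin.last n) = ((t n)^a) (Fin.last n) := by
        have := congrArg ((t n)^a) h
        rwa [Equiv.Perm.inv_def, Equiv.apply_symm_apply] at this
      rw [t_pow_apply] at h2
      have h3 : (a : Fin (n+1)) = Fin.last n - z (Fin.last n) := by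
        rw [h2]; ring
      have := congrArg Fin.val h3
      rwa [Fin.val_cast_of_lt ha] at this
    · intro h
      subst h
      have h3 : (a0 : Fin (n+1)) = Fin.last n - z (Fin.last n) := by
        rw [ha0, Fin.cast_val_eq_self]
      have h2 : z (Fin.last n) = ((t n)^a0) (Fin.last n) := by
        rw [t_pow_apply, h3]; ring
      rw [h2, Equiv.Perm.inv_def, Equiv.symm_apply_apply]
  rw [Finset.sum_eq_single a0]
  · have hcond0 := (hcond a0 ha0lt).mpr rfl
    rw [Efun, if_pos hcond0]
    set u := ((t n)^a0)⁻¹ * z with hu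
    have hz : z = (t n)^a0 * u := by rw [hu, mul_inv_cancel_left]
    have : pmaj z = a0 + pmaj u := by
      rw [hz]
      exact pmaj_t_pow_mul u hcond0 a0 (by omega)
    rw [this, pow_add]
  · intro a ha hne
    rw [Efun, if_neg, mul_zero]
    intro h
    exact hne ((hcond a (Finset.mem_range.mp ha)).mp h)
  · intro h
    exact absurd (Finset.mem_range.mpr ha0lt) h

end PermBlock

open PermBlock in
theorem detA {R : Type*} [CommRing R] (pp : R) (n : ℕ) (hn : 1 ≤ n) :
    Matrix.det (Matrix.of fun g h : Equiv.Perm (Fin n) => pp ^ pmaj (g⁻¹ * h)) =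
    ∏ k ∈ Finset.Icc 2 n, (1 - pp ^ k) ^ ((k - 1) * (n.factorial / k)) := by
  induction n, hn using Nat.le_induction with
  | base =>
    haveI : Unique (Equiv.Perm (Fin 1)) :=
      { default := 1
        uniq := fun a => Equiv.ext fun x => Fin.ext (by
          have := (a x).isLt
          have := x.isLt
          omega) }
    rw [Matrix.det_unique]
    have hpm : pmaj ((default : Equiv.Perm (Fin 1))⁻¹ * default) = 0 := by
      apply Finset.sum_eq_zero
      intro i _
      rw [dif_neg (by omega)]
    show pp ^ pmaj ((default : Equiv.Perm (Fin 1))⁻¹ * default) = _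
    rw [hpm, pow_zero, Finset.Icc_eq_empty (by omega), Finset.prod_empty]
  | succ n hn IH =>
    letI : DecidablePred (· ∈ Hstab n) :=
      fun g => decidable_of_iff (g (Fin.last n) = Fin.last n) mem_Hstab.symm
    letI : DecidablePred (· ∈ Subgroup.zpowers (t n)) := fun g => Classical.dec _
    have hfact : (Matrix.of fun g h : Equiv.Perm (Fin (n+1)) => pp ^ pmaj (g⁻¹ * h)) =
        (Matrix.of fun g h : Equiv.Perm (Fin (n+1)) => Gfun pp n (g⁻¹ * h)) *
        (Matrix.of fun g h : Equiv.Perm (Fin (n+1)) => Efun pp n (g⁻¹ * h)) := by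
      ext g h
      rw [Matrix.mul_apply]
      show pp ^ pmaj (g⁻¹ * h) = ∑ c : Equiv.Perm (Fin (n+1)), Gfun pp n (g⁻¹ * c) * Efun pp n (c⁻¹ * h)
      rw [← conv_GE pp (g⁻¹ * h)]
      apply Fintype.sum_equiv (Equiv.mulLeft g)
      intro y
      have e1 : g⁻¹ * (Equiv.mulLeft g y) = y := by
        simp [Equiv.coe_mulLeft]
      have e2 : (Equiv.mulLeft g y)⁻¹ * h = y⁻¹ * (g⁻¹ * h) := by
        simp [Equiv.coe_mulLeft, mul_assoc]
      rw [e1, e2]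
    rw [hfact, Matrix.det_mul]
    -- the E part
    have hE : (Matrix.of fun g h : Equiv.Perm (Fin (n+1)) => Efun pp n (g⁻¹ * h)).det =
        (∏ k ∈ Finset.Icc 2 n, (1 - pp ^ k) ^ ((k - 1) * (n.factorial / k))) ^ (n+1) := by
      rw [det_subgroup_support (Hstab n) (Efun pp n) (Efun_support pp)]
      have hinner : (Matrix.of fun a b : (Hstab n) =>
          Efun pp n ((a : Equiv.Perm (Fin (n+1)))⁻¹ * b)).det =
          (Matrix.of fun g h : Equiv.Perm (Fin n) => pp ^ pmaj (g⁻¹ * h)).det := by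
        rw [← Matrix.det_submatrix_equiv_self (ψ : Equiv.Perm (Fin n) ≃ (Hstab n))]
        congr 1
        ext u v
        show Efun pp n ((ψ u : Equiv.Perm (Fin (n+1)))⁻¹ * (ψ v)) = pp ^ pmaj (u⁻¹ * v)
        rw [ψ_coe, ψ_coe, ← φ_inv, ← φ_mul, Efun, if_pos (φ_last _), pmaj_φ]
      rw [hinner, IH]
      congr 1
      -- index computation
      have hcard := Subgroup.card_eq_card_quotient_mul_card_subgroup (Hstab n)
      have h1 : Nat.card (Hstab n) = n.factorial := by
        rw [← Nat.card_congr (ψ : Equiv.Perm (Fin n) ≃ (Hstab n)),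
          Nat.card_eq_fintype_card, Fintype.card_perm, Fintype.card_fin]
      have h2 : Nat.card (Equiv.Perm (Fin (n+1))) = (n+1).factorial := by
        rw [Nat.card_eq_fintype_card, Fintype.card_perm, Fintype.card_fin]
      rw [h1, h2, Nat.factorial_succ] at hcard
      have hfp := n.factorial_pos
      exact Nat.eq_of_mul_eq_mul_right hfp (by omega)
    -- the G part
    have hG : (Matrix.of fun g h : Equiv.Perm (Fin (n+1)) => Gfun pp n (g⁻¹ * h)).det =
        ((1 - pp ^ (n+1)) ^ n) ^ n.factorial := by
      rw [det_subgroup_support (Subgroup.zpowers (t n)) (Gfun pp n) (Gfun_support pp)]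
      have htfin : IsOfFinOrder (t n) := by
        rw [isOfFinOrder_iff_pow_eq_one]
        exact ⟨n+1, by omega, (t_pow_eq_one_iff _).mpr dvd_rfl⟩
      set e3 : Fin (n+1) ≃ ZMod (n+1) :=
        { toFun := fun i => ((i : ℕ) : ZMod (n+1))
          invFun := fun x => ⟨x.val, x.val_lt⟩
          left_inv := fun i => by ext; simp [ZMod.val_natCast_of_lt i.isLt]
          right_inv := fun x => by simp [ZMod.natCast_zmod_val] } with he3
      set e2 : Fin (n+1) ≃ (Subgroup.zpowers (t n)) :=
        (finCongr (orderOf_t n).symm).trans (finEquivZPowers htfin) with he2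
      have he2coe : ∀ i : Fin (n+1), ((e2 i : Equiv.Perm (Fin (n+1)))) = (t n) ^ (i : ℕ) := by
        intro i
        rw [he2]
        rfl
      have hinner : (Matrix.of fun a b : (Subgroup.zpowers (t n)) =>
          Gfun pp n ((a : Equiv.Perm (Fin (n+1)))⁻¹ * b)).det = (1 - pp ^ (n+1)) ^ n := by
        rw [← Matrix.det_submatrix_equiv_self e2]
        have hmat : ((Matrix.of fun a b : (Subgroup.zpowers (t n)) =>
            Gfun pp n ((a : Equiv.Perm (Fin (n+1)))⁻¹ * b)).submatrix e2 e2) =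
            ((Matrix.of fun a b : ZMod (n+1) => pp ^ (a - b).val).transpose).submatrix e3 e3 := by
          ext i j
          show Gfun pp n ((e2 i : Equiv.Perm (Fin (n+1)))⁻¹ * (e2 j)) =
            pp ^ ((((j : ℕ) : ZMod (n+1)) - ((i : ℕ) : ZMod (n+1))).val)
          rw [he2coe, he2coe]
          set c : ℕ := ((((j : ℕ) : ZMod (n+1)) - ((i : ℕ) : ZMod (n+1))).val) with hc
          have hclt : c < n + 1 := ZMod.val_lt _
          have hpow : ((t n) ^ (i : ℕ))⁻¹ * (t n) ^ (j : ℕ) = (t n) ^ c := by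
            have hmod : (j : ℕ) ≡ (i : ℕ) + c [MOD (n+1)] := by
              have : (((i : ℕ) + c : ℕ) : ZMod (n+1)) = (((j : ℕ) : ℕ) : ZMod (n+1)) := by
                push_cast
                rw [hc, ZMod.natCast_zmod_val]
                ring
              exact ((ZMod.natCast_eq_natCast_iff _ _ _).mp this).symm
            have : (t n) ^ (j : ℕ) = (t n) ^ ((i : ℕ) + c) := by
              rw [pow_eq_pow_iff_modEq, orderOf_t]
              exact hmod
            rw [this, pow_add]
            group
          rw [hpow, Gfun_tpow pp hclt]
        rw [hmat]
        rw [Matrix.det_submatrix_equiv_self e3, Matrix.det_transpose]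
        have := det_circulant (R := R) (n+1) pp
        rw [this]
        simp
      rw [hinner]
      congr 1
      have hcard := Subgroup.card_eq_card_quotient_mul_card_subgroup (Subgroup.zpowers (t n))
      rw [Nat.card_zpowers, orderOf_t, Nat.card_eq_fintype_card, Fintype.card_perm,
        Fintype.card_fin, Nat.factorial_succ] at hcard
      exact Nat.eq_of_mul_eq_mul_right (show 0 < n+1 by omega)
        (hcard.symm.trans (Nat.mul_comm _ _))
    rw [hG, hE]
    rw [Finset.prod_Icc_succ_top (by omega : 2 ≤ n + 1)]
    have hlastexp : (n + 1 - 1) * ((n+1).factorial / (n+1)) = n * n.factorial := by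
      rw [Nat.factorial_succ, Nat.mul_div_cancel_left _ (by omega : 0 < n+1),
        Nat.add_sub_cancel]
    have hprod : (∏ k ∈ Finset.Icc 2 n, (1 - pp ^ k) ^ ((k - 1) * (n.factorial / k))) ^ (n+1)
        = ∏ k ∈ Finset.Icc 2 n, (1 - pp ^ k) ^ ((k - 1) * ((n+1).factorial / k)) := by
      rw [← Finset.prod_pow]
      apply Finset.prod_congr rfl
      intro k hk
      rw [← pow_mul]
      congr 1
      have hk2 : 2 ≤ k := (Finset.mem_Icc.mp hk).1
      have hkn : k ≤ n := (Finset.mem_Icc.mp hk).2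
      have hdvd : k ∣ n.factorial := Nat.dvd_factorial (by omega) hkn
      rw [Nat.factorial_succ, Nat.mul_div_assoc _ hdvd]
      ring
    rw [hlastexp, hprod, ← pow_mul]
    ring

open Kronecker in
theorem detB {R : Type*} [CommRing R] (q : R) (m : ℕ) [NeZero m] :
    ∀ n : ℕ, Matrix.det (Matrix.of fun x y : (Fin n → ZMod m) =>
      q ^ (∑ i, (x i - y i).val)) = ((1 - q ^ m) ^ (m - 1)) ^ (n * m ^ (n - 1)) := by
  intro n
  induction n with
  | zero =>
    haveI : Unique (Fin 0 → ZMod m) :=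
      ⟨⟨fun i => i.elim0⟩, fun f => funext fun i => i.elim0⟩
    rw [Matrix.det_unique]
    simp
  | succ n ih =>
    set e := Fin.consEquiv (fun _ : Fin (n+1) => ZMod m) with he
    rw [← Matrix.det_submatrix_equiv_self e]
    have hmat : (Matrix.of fun x y : (Fin (n+1) → ZMod m) =>
        q ^ (∑ i, (x i - y i).val)).submatrix e e
        = (Matrix.of fun a b : ZMod m => q ^ (a - b).val) ⊗ₖ
          (Matrix.of fun x y : (Fin n → ZMod m) => q ^ (∑ i, (x i - y i).val)) := by
      apply Matrix.ext
      rintro ⟨x0, x⟩ ⟨y0, y⟩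
      show q ^ (∑ i : Fin (n+1), ((Fin.cons x0 x : Fin (n+1) → ZMod m) i
          - (Fin.cons y0 y : Fin (n+1) → ZMod m) i).val) = _
      rw [Fin.sum_univ_succ]
      simp only [Fin.cons_zero, Fin.cons_succ]
      rw [pow_add]
      rfl
    have hcard1 : Fintype.card (Fin n → ZMod m) = m ^ n := by
      simp [ZMod.card]
    have hcard2 : Fintype.card (ZMod m) = m := ZMod.card m
    rw [hmat, Matrix.det_kronecker, det_circulant, ih, hcard1, hcard2]
    simp only [← pow_mul]
    rw [← pow_add]
    congr 1
    cases n with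
    | zero => simp
    | succ k =>
      rw [Nat.add_sub_cancel, Nat.add_sub_cancel]
      ring

open ColoredPerm MvPolynomial in
/-- for all `m, n ≥ 1`, with `amaj(w,x) = maj(w)` and `col(w,x) = ∑|xᵢ|`,
`det( p^{amaj(gh⁻¹)} q^{col(gh⁻¹)} )_{g,h ∈ Sₙᵐ}
  = (1-q^m)^{n! m^{n-1}(m-1)n} ⬝ ∏_{k=2}^n (1-p^k)^{n! mⁿ (k-1)/k}`. -/
theorem stmt17 (n m : ℕ) (hn : 1 ≤ n) (hm : 1 ≤ m) [NeZero m] :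
    Matrix.det (Matrix.of fun g h : ColoredPerm n m =>
        (X 0 : MvPolynomial (Fin 2) ℚ) ^ pmaj (g * h⁻¹).1 *
          (X 1 : MvPolynomial (Fin 2) ℚ) ^ col (g * h⁻¹)) =
      (1 - (X 1 : MvPolynomial (Fin 2) ℚ) ^ m) ^
          (n.factorial * m ^ (n - 1) * (m - 1) * n) *
      ∏ k ∈ Finset.Icc 2 n,
        (1 - (X 0 : MvPolynomial (Fin 2) ℚ) ^ k) ^ (n.factorial * m ^ n * (k - 1) / k) := by
  classical
  set p : MvPolynomial (Fin 2) ℚ := X 0 with hp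
  set q : MvPolynomial (Fin 2) ℚ := X 1 with hq
  let e0 : (Equiv.Perm (Fin n) × (Fin n → ZMod m)) ≃ ColoredPerm n m := Equiv.refl _
  rw [← Matrix.det_submatrix_equiv_self e0]
  have hmat : (Matrix.of fun g h : ColoredPerm n m =>
        p ^ pmaj (g * h⁻¹).1 * q ^ col (g * h⁻¹)).submatrix e0 e0
      = Matrix.kroneckerMap (· * ·)
          (Matrix.of fun w v : Equiv.Perm (Fin n) => p ^ pmaj (w * v⁻¹))
          (Matrix.of fun x y : (Fin n → ZMod m) => q ^ (∑ i, (x i - y i).val)) := by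
    apply Matrix.ext
    rintro ⟨w, x⟩ ⟨v, y⟩
    show p ^ pmaj ((e0 (w, x) * (e0 (v, y))⁻¹).1) * q ^ col (e0 (w, x) * (e0 (v, y))⁻¹)
        = p ^ pmaj (w * v⁻¹) * q ^ (∑ i, (x i - y i).val)
    have hfst : (e0 (w, x) * (e0 (v, y))⁻¹).1 = w * v⁻¹ := rfl
    have hcol : col (e0 (w, x) * (e0 (v, y))⁻¹) = ∑ i, (x i - y i).val := by
      show (∑ i, (((x ∘ ⇑(v⁻¹ : Equiv.Perm (Fin n))) + -(y ∘ ⇑(v⁻¹ : Equiv.Perm (Fin n)))) i).val) = _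
      have hterm : ∀ i, (((x ∘ ⇑(v⁻¹ : Equiv.Perm (Fin n))) + -(y ∘ ⇑(v⁻¹ : Equiv.Perm (Fin n)))) i)
          = x ((v⁻¹ : Equiv.Perm (Fin n)) i) - y ((v⁻¹ : Equiv.Perm (Fin n)) i) := by
        intro i
        simp [sub_eq_add_neg]
      rw [Finset.sum_congr rfl (fun i _ => by rw [hterm i])]
      exact Equiv.sum_comp (v⁻¹ : Equiv.Perm (Fin n)) (fun j => (x j - y j).val)
    rw [hfst, hcol]
  rw [hmat, Matrix.det_kronecker]
  have hAconv : (Matrix.of fun w v : Equiv.Perm (Fin n) => p ^ pmaj (w * v⁻¹)).det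
      = (Matrix.of fun w v : Equiv.Perm (Fin n) => p ^ pmaj (w⁻¹ * v)).det := by
    have hsub : (Matrix.of fun w v : Equiv.Perm (Fin n) => p ^ pmaj (w * v⁻¹)).submatrix
        ⇑(Equiv.inv (Equiv.Perm (Fin n))) ⇑(Equiv.inv (Equiv.Perm (Fin n)))
        = Matrix.of fun w v : Equiv.Perm (Fin n) => p ^ pmaj (w⁻¹ * v) := by
      apply Matrix.ext
      intro w v
      show p ^ pmaj (w⁻¹ * (v⁻¹)⁻¹) = p ^ pmaj (w⁻¹ * v)
      rw [inv_inv]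
    rw [← Matrix.det_submatrix_equiv_self (Equiv.inv (Equiv.Perm (Fin n)))
      (Matrix.of fun w v : Equiv.Perm (Fin n) => p ^ pmaj (w * v⁻¹)), hsub]
  rw [hAconv, detA p n hn, detB q m n]
  have hcard1 : Fintype.card (Fin n → ZMod m) = m ^ n := by simp [ZMod.card]
  have hcard2 : Fintype.card (Equiv.Perm (Fin n)) = n.factorial := by
    rw [Fintype.card_perm, Fintype.card_fin]
  rw [hcard1, hcard2]
  rw [mul_comm]
  congr 1
  · rw [← pow_mul, ← pow_mul]
    congr 1
    ring
  · rw [← Finset.prod_pow]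
    apply Finset.prod_congr rfl
    intro k hk
    rw [← pow_mul]
    congr 1
    have hk2 : 2 ≤ k := (Finset.mem_Icc.mp hk).1
    have hkn : k ≤ n := (Finset.mem_Icc.mp hk).2
    obtain ⟨c, hc⟩ := Nat.dvd_factorial (show 0 < k by omega) hkn
    rw [hc, Nat.mul_div_cancel_left _ (show 0 < k by omega)]
    rw [show k * c * m ^ n * (k - 1) = k * (c * m ^ n * (k - 1)) by ring,
      Nat.mul_div_cancel_left _ (show 0 < k by omega)]
    ring
end
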